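/- Fix ρ > 0 and θ ∈ ℝ. For N in the range where Nρ(1+θ) < 1, the cooperative cutoff a*(N) = (ln(1+1/γ₂(N)) − ln(1+1/γ₁(N)))/(γ₂(N) − γ₁(N)), where γ₁(N) < γ₂(N) solve γ(γ−θ) = 1/(Nρ), is strictly increasing in N (treated as a real variable). -/

import Mathlib

open MeasureTheory

/-- The cooperative stopping cutoff `a*` as a function of the roots. -/
noncomputable def astarDef (γ₁ γ₂ : ℝ) : ℝ :=
  (Real.log (1 + 1 / γ₂) - Real.log (1 + 1 / γ₁)) / (γ₂ - γ₁)

lemma pos_on_uIcc (m s : ℝ) (hs : 0 < s) (h : 0 < m - s / 2) :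
    ∀ v ∈ Set.uIcc (-(1:ℝ)/2) (1/2), 0 < m - s * v := by
  intro v hv
  rw [Set.uIcc_of_le (by norm_num)] at hv
  have h2 : s * v ≤ s * (1/2) := mul_le_mul_of_nonneg_left hv.2 hs.le
  nlinarith

lemma integrable_inv_linear (m s : ℝ) (hs : 0 < s) (h : 0 < m - s / 2) :
    IntervalIntegrable (fun v => (m - s * v)⁻¹) volume (-(1:ℝ)/2) (1/2) := by
  apply ContinuousOn.intervalIntegrable
  exact ContinuousOn.inv₀ (by fun_prop) fun v hv => ne_of_gt (pos_on_uIcc m s hs h v hv)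

lemma integral_inv_linear (m s : ℝ) (hs : 0 < s) (h : 0 < m - s / 2) :
    ∫ v in (-(1:ℝ)/2)..(1/2), (m - s * v)⁻¹
      = (Real.log (m + s / 2) - Real.log (m - s / 2)) / s := by
  have hpos := pos_on_uIcc m s hs h
  have hderiv : ∀ v ∈ Set.uIcc (-(1:ℝ)/2) (1/2),
      HasDerivAt (fun v => -s⁻¹ * Real.log (m - s * v)) ((m - s * v)⁻¹) v := by
    intro v hv
    have h1 : HasDerivAt (fun v : ℝ => m - s * v) (-s) v := by
      simpa using ((hasDerivAt_id v).const_mul s).const_sub m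
    have h2 := (Real.hasDerivAt_log (ne_of_gt (hpos v hv))).comp v h1
    have h3 := h2.const_mul (-s⁻¹)
    have hs0 : s ≠ 0 := ne_of_gt hs
    have hm0 : m - s * v ≠ 0 := ne_of_gt (hpos v hv)
    exact h3.congr_deriv (by field_simp)
  rw [intervalIntegral.integral_eq_sub_of_hasDerivAt hderiv
    (integrable_inv_linear m s hs h)]
  have e1 : m - s * (1/2) = m - s / 2 := by ring
  have e2 : m - s * (-(1:ℝ)/2) = m + s / 2 := by ring
  rw [e1, e2]
  field_simp
  ring

lemma astar_eq_integral (θ c γ₁ γ₂ : ℝ) (hsum : γ₁ + γ₂ = θ) (hprod : γ₁ * γ₂ = -c)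
    (h1 : γ₁ < -1) (h2 : 0 < γ₂) (h3 : γ₂ < c) :
    astarDef γ₁ γ₂ = ∫ v in (-(1:ℝ)/2)..(1/2), ((c - θ/2) - (γ₂ - γ₁) * v)⁻¹ := by
  have hγ₁0 : γ₁ ≠ 0 := by intro h; rw [h] at h1; norm_num at h1
  have hs : 0 < γ₂ - γ₁ := by linarith
  have hms : 0 < (c - θ/2) - (γ₂ - γ₁) / 2 := by
    have : (c - θ/2) - (γ₂ - γ₁) / 2 = c - γ₂ := by rw [← hsum]; ring
    rw [this]; linarith
  rw [integral_inv_linear _ _ hs hms]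
  have e1 : c - θ/2 + (γ₂ - γ₁) / 2 = c - γ₁ := by rw [← hsum]; ring
  have e2 : c - θ/2 - (γ₂ - γ₁) / 2 = c - γ₂ := by rw [← hsum]; ring
  rw [e1, e2]
  have p1 : (0:ℝ) < 1 + 1 / γ₂ := by positivity
  have p2 : (0:ℝ) < 1 + 1 / γ₁ := by
    have : 1 + 1 / γ₁ = (γ₁ + 1) / γ₁ := by field_simp
    rw [this]
    exact div_pos_iff.mpr (Or.inr ⟨by linarith, by linarith⟩)
  have p3 : (0:ℝ) < c - γ₁ := by linarith
  have p4 : (0:ℝ) < c - γ₂ := by linarith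
  have key : (1 + 1 / γ₂) * (c - γ₂) = (1 + 1 / γ₁) * (c - γ₁) := by
    field_simp
    ring_nf
    nlinarith [hprod, hsum]
  have klog : Real.log (1 + 1 / γ₂) + Real.log (c - γ₂)
      = Real.log (1 + 1 / γ₁) + Real.log (c - γ₁) := by
    rw [← Real.log_mul p1.ne' p4.ne', ← Real.log_mul p2.ne' p3.ne', key]
  unfold astarDef
  rw [show Real.log (1 + 1 / γ₂) - Real.log (1 + 1 / γ₁)
      = Real.log (c - γ₁) - Real.log (c - γ₂) by linarith]

lemma roots_facts (θ c γ₁ γ₂ : ℝ) (hθ : 1 + θ < c) (hc : 0 < c) (hlt : γ₁ < γ₂)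
    (h1 : γ₁ * (γ₁ - θ) = c) (h2 : γ₂ * (γ₂ - θ) = c) :
    γ₁ + γ₂ = θ ∧ γ₁ * γ₂ = -c ∧ γ₁ < -1 ∧ 0 < γ₂ ∧ γ₂ < c ∧ 1 < γ₂ - γ₁ := by
  have hsum : γ₁ + γ₂ = θ := by
    have h : (γ₂ - γ₁) * (γ₁ + γ₂ - θ) = 0 := by linear_combination h2 - h1
    rcases mul_eq_zero.mp h with h | h
    · exfalso; linarith [sub_pos.mpr hlt]
    · linarith
  have hprod : γ₁ * γ₂ = -c := by linear_combination γ₁ * hsum - h1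
  have hγ₂ : 0 < γ₂ := by nlinarith
  have hγ₁ : γ₁ < -1 := by
    by_contra h
    push_neg at h
    nlinarith [mul_nonneg (show (0:ℝ) ≤ γ₁ + 1 by linarith)
      (show (0:ℝ) ≤ γ₂ + 1 by linarith)]
  have hγ₂c : γ₂ < c := by
    by_contra h
    push_neg at h
    nlinarith [mul_nonneg (show (0:ℝ) ≤ c - γ₁ by linarith)
      (show (0:ℝ) ≤ γ₂ - c by linarith)]
  have hsq : (γ₂ - γ₁)^2 = θ^2 + 4*c := by
    linear_combination (γ₁ + γ₂ + θ) * hsum - 4 * hprod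
  have hsgt : 1 < γ₂ - γ₁ := by
    by_contra h
    push_neg at h
    nlinarith [sq_nonneg (θ + 1), mul_pos (show (0:ℝ) < γ₂ - γ₁ by linarith)
      (show (0:ℝ) < γ₂ - γ₁ by linarith)]
  exact ⟨hsum, hprod, hγ₁, hγ₂, hγ₂c, hsgt⟩

set_option maxHeartbeats 1000000 in
theorem cooperative_cutoff_increasing_in_N (ρ θ N₁ N₂ γ₁ γ₂ δ₁ δ₂ : ℝ)
    (hρ : 0 < ρ) (hN₁ : 1 ≤ N₁) (hN : N₁ < N₂)
    (hmain₂ : N₂ * ρ * (1 + θ) < 1)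
    (hlt : γ₁ < γ₂) (hlt' : δ₁ < δ₂)
    (hroot1 : γ₁ * (γ₁ - θ) = 1 / (N₁ * ρ))
    (hroot2 : γ₂ * (γ₂ - θ) = 1 / (N₁ * ρ))
    (hroot1' : δ₁ * (δ₁ - θ) = 1 / (N₂ * ρ))
    (hroot2' : δ₂ * (δ₂ - θ) = 1 / (N₂ * ρ)) :
    astarDef γ₁ γ₂ < astarDef δ₁ δ₂ := by
  have hN₁0 : 0 < N₁ := lt_of_lt_of_le one_pos hN₁
  have hN₂0 : 0 < N₂ := lt_trans hN₁0 hN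
  set c₁ : ℝ := 1 / (N₁ * ρ) with hc₁def
  set c₂ : ℝ := 1 / (N₂ * ρ) with hc₂def
  have hc₂0 : 0 < c₂ := by positivity
  have hθc₂ : 1 + θ < c₂ := by
    rw [hc₂def, lt_div_iff₀ (by positivity)]
    nlinarith
  have hc₂c₁ : c₂ < c₁ := by
    rw [hc₁def, hc₂def]
    apply one_div_lt_one_div_of_lt (by positivity)
    nlinarith
  have hθc₁ : 1 + θ < c₁ := by linarith
  have hc₁0 : 0 < c₁ := by linarith
  obtain ⟨hsum₁, hprod₁, hg₁, hg₂, hg₂c, hs₁⟩ :=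
    roots_facts θ c₁ γ₁ γ₂ hθc₁ hc₁0 hlt hroot1 hroot2
  obtain ⟨hsum₂, hprod₂, hd₁, hd₂, hd₂c, hs₂⟩ :=
    roots_facts θ c₂ δ₁ δ₂ hθc₂ hc₂0 hlt' hroot1' hroot2'
  have hsq₁ : (γ₂ - γ₁)^2 = θ^2 + 4*c₁ := by
    linear_combination (γ₁ + γ₂ + θ) * hsum₁ - 4 * hprod₁
  have hsq₂ : (δ₂ - δ₁)^2 = θ^2 + 4*c₂ := by
    linear_combination (δ₁ + δ₂ + θ) * hsum₂ - 4 * hprod₂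
  -- s₁ := γ₂ - γ₁ > s₂ := δ₂ - δ₁
  have hss : δ₂ - δ₁ < γ₂ - γ₁ := by nlinarith
  have hms₁ : 0 < (c₁ - θ/2) - (γ₂ - γ₁) / 2 := by
    have e : (c₁ - θ/2) - (γ₂ - γ₁) / 2 = c₁ - γ₂ := by rw [← hsum₁]; ring
    rw [e]; linarith
  have hms₂ : 0 < (c₂ - θ/2) - (δ₂ - δ₁) / 2 := by
    have e : (c₂ - θ/2) - (δ₂ - δ₁) / 2 = c₂ - δ₂ := by rw [← hsum₂]; ring
    rw [e]; linarith
  have hi₁ := integrable_inv_linear (c₁ - θ/2) (γ₂ - γ₁) (by linarith) hms₁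
  have hi₂ := integrable_inv_linear (c₂ - θ/2) (δ₂ - δ₁) (by linarith) hms₂
  rw [astar_eq_integral θ c₁ γ₁ γ₂ hsum₁ hprod₁ hg₁ hg₂ hg₂c,
    astar_eq_integral θ c₂ δ₁ δ₂ hsum₂ hprod₂ hd₁ hd₂ hd₂c,
    ← sub_pos, ← intervalIntegral.integral_sub hi₂ hi₁]
  refine intervalIntegral.intervalIntegral_pos_of_pos_on (hi₂.sub hi₁) ?_ (by norm_num)
  intro v hv
  obtain ⟨hv1, hv2⟩ := hv
  have hden₂ : 0 < (c₂ - θ/2) - (δ₂ - δ₁) * v := by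
    have : (δ₂ - δ₁) * v < (δ₂ - δ₁) * (1/2) :=
      mul_lt_mul_of_pos_left (by linarith) (by linarith)
    nlinarith
  have hden₁ : (c₂ - θ/2) - (δ₂ - δ₁) * v < (c₁ - θ/2) - (γ₂ - γ₁) * v := by
    nlinarith [mul_pos (show (0:ℝ) < (γ₂ - γ₁) - (δ₂ - δ₁) by linarith)
      (show (0:ℝ) < (γ₂ - γ₁) + (δ₂ - δ₁) - 4 * v by linarith)]
  have := inv_strictAnti₀ hden₂ hden₁

  linarith
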